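/- arXiv:2509.19235 — 2 statements merged into one kernel-verified Lean document; each statement's English description precedes it below -/
import Mathlib

section
/- For the α-F distributed power X with parameters α, μ, m, λ and mean-square Ω, the n-th moment is E[Xⁿ] = (c^{2n/α}) · Γ(μ + 2n/α)·Γ(m − 2n/α) / (Γ(μ)·Γ(m)), where c = (m−1)Ω^{α/2}/(λ^{α/2}μ), valid whenever −αμ/2 < n < αm/2. -/
open MeasureTheory Set Real

lemma real_beta_Ioo (p q : ℝ) (hp : 0 < p) (hq : 0 < q) :
    ∫ t in Ioo (0:ℝ) 1, t ^ (p - 1) * (1 - t) ^ (q - 1) =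
      Real.Gamma p * Real.Gamma q / Real.Gamma (p + q) := by
  have hpq : 0 < p + q := by linarith
  have hG : Real.Gamma (p + q) ≠ 0 := (Real.Gamma_pos_of_pos hpq).ne'
  have h := Complex.Gamma_mul_Gamma_eq_betaIntegral (s := (p : ℂ)) (t := (q : ℂ))
    (by simpa using hp) (by simpa using hq)
  have hbeta : Complex.betaIntegral p q =
      ((∫ t in Ioo (0:ℝ) 1, t ^ (p - 1) * (1 - t) ^ (q - 1) : ℝ) : ℂ) := by
    rw [Complex.betaIntegral, intervalIntegral.integral_of_le zero_le_one,
      ← MeasureTheory.integral_Ioc_eq_integral_Ioo]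
    rw [show ((∫ t in Ioc (0:ℝ) 1, t ^ (p - 1) * (1 - t) ^ (q - 1) : ℝ) : ℂ) =
      ∫ t in Ioc (0:ℝ) 1, ((t ^ (p - 1) * (1 - t) ^ (q - 1) : ℝ) : ℂ) from
      (integral_ofReal (𝕜 := ℂ)).symm]
    refine setIntegral_congr_fun measurableSet_Ioc fun x hx => ?_
    have hx0 : (0:ℝ) ≤ x := le_of_lt hx.1
    have hx1 : (0:ℝ) ≤ 1 - x := by linarith [hx.2]
    rw [Complex.ofReal_mul, Complex.ofReal_cpow hx0, Complex.ofReal_cpow hx1]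
    push_cast
    ring
  rw [hbeta, ← Complex.ofReal_add, Complex.Gamma_ofReal, Complex.Gamma_ofReal,
    Complex.Gamma_ofReal] at h
  have h2 : (Real.Gamma p * Real.Gamma q : ℝ) =
      Real.Gamma (p + q) * ∫ t in Ioo (0:ℝ) 1, t ^ (p-1) * (1-t) ^ (q-1) := by
    exact_mod_cast h
  field_simp
  linarith [h2]

lemma beta_Ioi (p q : ℝ) (hp : 0 < p) (hq : 0 < q) :
    ∫ u in Ioi (0:ℝ), u ^ (p - 1) * (1 + u) ^ (-(p + q)) =
      Real.Gamma p * Real.Gamma q / Real.Gamma (p + q) := by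
  have key : ∫ u in Ioi (0:ℝ), u ^ (p - 1) * (1 + u) ^ (-(p + q)) =
      ∫ t in Ioo (0:ℝ) 1, t ^ (p - 1) * (1 - t) ^ (q - 1) := by
    have himg : (fun t : ℝ => t / (1 - t)) '' Ioo 0 1 = Ioi 0 := by
      ext y
      constructor
      · rintro ⟨t, ht, rfl⟩
        exact div_pos ht.1 (by linarith [ht.2])
      · intro hy
        simp only [mem_Ioi] at hy
        refine ⟨y / (1 + y), ⟨div_pos hy (by linarith), ?_⟩, ?_⟩
        · rw [div_lt_one (by linarith)]; linarith
        · have h1y : (0:ℝ) < 1 + y := by linarith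
          field_simp
          ring
    have hderiv : ∀ t ∈ Ioo (0:ℝ) 1,
        HasDerivWithinAt (fun t : ℝ => t / (1 - t)) (((1 - t) ^ 2)⁻¹) (Ioo 0 1) t := by
      intro t ht
      have h1t : (1:ℝ) - t ≠ 0 := by have := ht.2; intro h; linarith
      have := (hasDerivAt_id t).div ((hasDerivAt_const t (1:ℝ)).sub (hasDerivAt_id t)) h1t
      refine this.hasDerivWithinAt.congr_deriv ?_
      simp only [Pi.sub_apply, id]
      ring
    have hinj : InjOn (fun t : ℝ => t / (1 - t)) (Ioo 0 1) := by
      apply StrictMonoOn.injOn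
      intro a ha b hb hab
      have h1a : (0:ℝ) < 1 - a := by linarith [ha.2]
      have h1b : (0:ℝ) < 1 - b := by linarith [hb.2]
      simp only
      rw [div_lt_div_iff₀ h1a h1b]
      nlinarith
    have himage := integral_image_eq_integral_abs_deriv_smul measurableSet_Ioo hderiv hinj
      (fun u => u ^ (p - 1) * (1 + u) ^ (-(p + q)))
    rw [himg] at himage
    rw [himage]
    refine setIntegral_congr_fun measurableSet_Ioo fun t ht => ?_
    have ht0 : (0:ℝ) < t := ht.1
    have h1t : (0:ℝ) < 1 - t := by linarith [ht.2]
    have h1 : 1 + t / (1 - t) = (1 - t)⁻¹ := by field_simp; ring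
    have eA : (((1 - t):ℝ)⁻¹) ^ (-(p + q)) = (1 - t) ^ (p + q) := by
      rw [Real.inv_rpow h1t.le, ← Real.rpow_neg h1t.le, neg_neg]
    have eB : ((t / (1 - t)):ℝ) ^ (p - 1) = t ^ (p - 1) * (1 - t) ^ (-(p - 1)) := by
      rw [Real.div_rpow ht0.le h1t.le, div_eq_mul_inv, ← Real.rpow_neg h1t.le]
    have eC : ((((1 - t):ℝ)) ^ (2:ℕ))⁻¹ = (1 - t) ^ (-2 : ℝ) := by
      rw [← Real.rpow_natCast (1 - t) 2, ← Real.rpow_neg h1t.le]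
      norm_num
    have eD : (1 - t) ^ (-2:ℝ) * ((1 - t) ^ (-(p - 1)) * (1 - t) ^ (p + q)) =
        (1 - t) ^ (q - 1) := by
      rw [← Real.rpow_add h1t, ← Real.rpow_add h1t]
      congr 1
      ring
    rw [smul_eq_mul, h1, abs_of_pos (by positivity : (0:ℝ) < (((1 - t)) ^ 2)⁻¹),
      eA, eB, eC]
    rw [← eD]
    ring
  rw [key]
  exact real_beta_Ioo p q hp hq

theorem alphaF_moments (α μ m lam Ω n : ℝ)
    (hα : 0 < α) (hμ : 0 < μ) (hm : 1 < m) (hlam : 0 < lam) (hΩ : 0 < Ω)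
    (hn1 : -(α * μ / 2) < n) (hn2 : n < α * m / 2) :
    ∫ x in Ioi (0:ℝ),
      x ^ n * ((α / (2 * (Real.Gamma μ * Real.Gamma m / Real.Gamma (μ + m)))) *
        ((m - 1) * Ω ^ (α/2) / (lam ^ (α/2) * μ)) ^ m *
        x ^ (α * μ / 2 - 1) *
        (x ^ (α/2) + (m - 1) * Ω ^ (α/2) / (lam ^ (α/2) * μ)) ^ (-(m + μ))) =
      ((m - 1) * Ω ^ (α/2) / (lam ^ (α/2) * μ)) ^ (2 * n / α) *
        (Real.Gamma (μ + 2 * n / α) * Real.Gamma (m - 2 * n / α)) /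
        (Real.Gamma μ * Real.Gamma m) := by
  set c : ℝ := (m - 1) * Ω ^ (α/2) / (lam ^ (α/2) * μ) with hc_def
  have hc : 0 < c := by
    apply div_pos
    · exact mul_pos (by linarith) (rpow_pos_of_pos hΩ _)
    · exact mul_pos (rpow_pos_of_pos hlam _) hμ
  set B : ℝ := Real.Gamma μ * Real.Gamma m / Real.Gamma (μ + m) with hB_def
  have hΓμ : 0 < Real.Gamma μ := Real.Gamma_pos_of_pos hμ
  have hΓm : 0 < Real.Gamma m := Real.Gamma_pos_of_pos (by linarith)
  have hΓμm : 0 < Real.Gamma (μ + m) := Real.Gamma_pos_of_pos (by linarith)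
  have hB : 0 < B := div_pos (mul_pos hΓμ hΓm) hΓμm
  set p : ℝ := μ + 2 * n / α with hp_def
  set q : ℝ := m - 2 * n / α with hq_def
  have hp2 : -μ < 2 * n / α := by
    rw [lt_div_iff₀ hα]; nlinarith
  have hq2 : 2 * n / α < m := by
    rw [div_lt_iff₀ hα]; nlinarith
  have hp : 0 < p := by rw [hp_def]; linarith
  have hq : 0 < q := by rw [hq_def]; linarith
  have hpq : p + q = m + μ := by rw [hp_def, hq_def]; ring
  have h2α : (0:ℝ) < 2 / α := by positivity
  set G : ℝ → ℝ := fun x => x ^ n * ((α / (2 * B)) * c ^ m * x ^ (α * μ / 2 - 1) *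
      (x ^ (α/2) + c) ^ (-(m + μ))) with hG_def
  set K : ℝ := c⁻¹ * (c ^ (2 * n / α) / B) with hK_def
  have key : ∀ u ∈ Ioi (0:ℝ), (2/α * (c * u) ^ (2/α - 1)) • G ((c * u) ^ (2/α)) =
      K * (u ^ (p - 1) * (1 + u) ^ (-(p + q))) := by
    intro u hu
    have hu0 : (0:ℝ) < u := hu
    have hcu : (0:ℝ) < c * u := mul_pos hc hu0
    have h1u : (0:ℝ) < 1 + u := by linarith
    have e1 : ((c*u) ^ (2/α)) ^ (α/2) = c * u := by
      rw [← Real.rpow_mul hcu.le, show 2/α * (α/2) = 1 by field_simp, Real.rpow_one]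
    have e2 : ((c*u) ^ (2/α)) ^ n = (c*u) ^ (2 * n / α) := by
      rw [← Real.rpow_mul hcu.le]
      congr 1
      field_simp
    have e3 : ((c*u) ^ (2/α)) ^ (α * μ / 2 - 1) = (c*u) ^ (μ - 2/α) := by
      rw [← Real.rpow_mul hcu.le]
      congr 1
      field_simp
    have e4 : c * u + c = c * (1 + u) := by ring
    have hαne : α ≠ 0 := hα.ne'
    have hBne : B ≠ 0 := hB.ne'
    have hn1' : c ^ (2/α) ≠ 0 := (rpow_pos_of_pos hc _).ne'
    have hn2' : u ^ (2/α) ≠ 0 := (rpow_pos_of_pos hu0 _).ne'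
    have hn3' : c ^ (2*n/α) ≠ 0 := (rpow_pos_of_pos hc _).ne'
    have hn4' : u ^ (2*n/α) ≠ 0 := (rpow_pos_of_pos hu0 _).ne'
    have hn5' : c ^ μ ≠ 0 := (rpow_pos_of_pos hc _).ne'
    have hn6' : u ^ μ ≠ 0 := (rpow_pos_of_pos hu0 _).ne'
    have hn7' : c ^ m ≠ 0 := (rpow_pos_of_pos hc _).ne'
    have hn8' : (1+u) ^ m ≠ 0 := (rpow_pos_of_pos h1u _).ne'
    have hn9' : (1+u) ^ μ ≠ 0 := (rpow_pos_of_pos h1u _).ne'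
    rw [smul_eq_mul, hK_def, hpq]
    simp only [hG_def, e1, e2, e3, e4, hp_def]
    rw [Real.mul_rpow hc.le h1u.le, Real.mul_rpow hc.le hu0.le, Real.mul_rpow hc.le hu0.le,
      Real.mul_rpow hc.le hu0.le]
    rw [Real.rpow_sub hc, Real.rpow_sub hu0, Real.rpow_sub hc, Real.rpow_sub hu0,
      Real.rpow_sub hu0,
      Real.rpow_neg hc.le, Real.rpow_neg h1u.le,
      Real.rpow_add hc, Real.rpow_add h1u, Real.rpow_add hu0]
    field_simp
    ring
    simp
  have hscale : ∀ F : ℝ → ℝ, (∫ x in Ioi (0:ℝ), F x) = c • ∫ x in Ioi (0:ℝ), F (c * x) := by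
    intro F
    rw [integral_comp_mul_left_Ioi F 0 hc, mul_zero, smul_smul,
      mul_inv_cancel₀ hc.ne', one_smul]
  have hbeta := beta_Ioi p q hp hq
  have hΓne : Real.Gamma μ ≠ 0 := hΓμ.ne'
  have hΓmne : Real.Gamma m ≠ 0 := hΓm.ne'
  have hΓμmne : Real.Gamma (μ + m) ≠ 0 := hΓμm.ne'
  calc ∫ x in Ioi (0:ℝ), G x
      = ∫ x in Ioi (0:ℝ), (2/α * x ^ (2/α - 1)) • G (x ^ (2/α)) :=
        (integral_comp_rpow_Ioi_of_pos h2α).symm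
    _ = c • ∫ x in Ioi (0:ℝ), (2/α * (c * x) ^ (2/α - 1)) • G ((c * x) ^ (2/α)) :=
        hscale _
    _ = c • ∫ x in Ioi (0:ℝ), K * (x ^ (p - 1) * (1 + x) ^ (-(p + q))) := by
        exact congrArg (fun z => c • z) (setIntegral_congr_fun measurableSet_Ioi key)
    _ = c • (K * ∫ x in Ioi (0:ℝ), x ^ (p - 1) * (1 + x) ^ (-(p + q))) := by
        rw [integral_const_mul]
    _ = c ^ (2 * n / α) * (Real.Gamma p * Real.Gamma q) / (Real.Gamma μ * Real.Gamma m) := by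
        rw [hbeta, hK_def, hB_def, smul_eq_mul,
          show Real.Gamma (p + q) = Real.Gamma (μ + m) by rw [hpq, add_comm]]
        field_simp
end

section
/- For the product V = X·Z (α-F fading times pointing error), the density satisfies f_V(v) = c₁ v^{αμ/2 − 1} ∫₀^∞ y e^{−y(β−αμ)/2} (v^{α/2} e^{αy/2} + c₂)^{−(m+μ)} dy, where c₁ = (β²α/(8B(μ,m)))·c₂^m and c₂ is the α-F scale constant, via the substitution z = e^{−y} in the product-density integral f_V(v) = ∫₀¹ (1/z) f_X(v/z) f_Z(z) dz. -/
open MeasureTheory Set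

theorem product_density_integral_form (α μ m β c₂ v : ℝ)
    (hα : 0 < α) (hμ : 0 < μ) (hm : 1 < m) (hβ : 0 < β) (hc₂ : 0 < c₂) (hv : 0 < v) :
    ∫ z in Ioo (0:ℝ) 1,
      (1 / z) *
        ((α / (2 * (Real.Gamma μ * Real.Gamma m / Real.Gamma (μ + m)))) * c₂ ^ m *
          (v / z) ^ (α * μ / 2 - 1) * ((v / z) ^ (α/2) + c₂) ^ (-(m + μ))) *
        (-(β^2/4) * Real.log z * z ^ (β/2 - 1)) =
      (β^2 * α / (8 * (Real.Gamma μ * Real.Gamma m / Real.Gamma (μ + m)))) * c₂ ^ m *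
        v ^ (α * μ / 2 - 1) *
        ∫ y in Ioi (0:ℝ),
          y * Real.exp (-y * (β - α * μ) / 2) *
            (v ^ (α/2) * Real.exp (α * y / 2) + c₂) ^ (-(m + μ)) := by
  set B := Real.Gamma μ * Real.Gamma m / Real.Gamma (μ + m) with hB
  set g : ℝ → ℝ := fun z =>
      (1 / z) *
        ((α / (2 * B)) * c₂ ^ m *
          (v / z) ^ (α * μ / 2 - 1) * ((v / z) ^ (α/2) + c₂) ^ (-(m + μ))) *
        (-(β^2/4) * Real.log z * z ^ (β/2 - 1)) with hg
  have himg : (fun y : ℝ => Real.exp (-y)) '' Ioi 0 = Ioo (0:ℝ) 1 := by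
    ext z
    constructor
    · rintro ⟨y, hy, rfl⟩
      exact ⟨Real.exp_pos _, Real.exp_lt_one_iff.2 (by simpa using hy)⟩
    · intro hz
      refine ⟨-Real.log z, ?_, by simp [Real.exp_log hz.1]⟩
      simpa using Real.log_neg hz.1 hz.2
  have hderiv : ∀ x ∈ Ioi (0:ℝ),
      HasDerivWithinAt (fun y : ℝ => Real.exp (-y)) (-Real.exp (-x)) (Ioi 0) x := by
    intro x _
    have := (Real.hasDerivAt_exp (-x)).comp x (hasDerivAt_neg x)
    simpa [mul_comm, Function.comp_def] using this.hasDerivWithinAt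
  have hinj : InjOn (fun y : ℝ => Real.exp (-y)) (Ioi 0) :=
    (Real.exp_injective.comp neg_injective).injOn
  calc
    ∫ z in Ioo (0:ℝ) 1, g z
        = ∫ z in (fun y : ℝ => Real.exp (-y)) '' Ioi 0, g z := by rw [himg]
    _ = ∫ y in Ioi (0:ℝ), |(-Real.exp (-y))| • g (Real.exp (-y)) :=
        integral_image_eq_integral_abs_deriv_smul measurableSet_Ioi hderiv hinj g
    _ = ∫ y in Ioi (0:ℝ), (β^2 * α / (8 * B)) * c₂ ^ m * v ^ (α * μ / 2 - 1) *
          (y * Real.exp (-y * (β - α * μ) / 2) *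
            (v ^ (α/2) * Real.exp (α * y / 2) + c₂) ^ (-(m + μ))) := by
        refine setIntegral_congr_fun measurableSet_Ioi fun y hy => ?_
        have hey : (0:ℝ) < Real.exp (-y) := Real.exp_pos _
        have h0 : (1:ℝ) / Real.exp (-y) = Real.exp y := by
          rw [Real.exp_neg]; simp
        have h1 : v / Real.exp (-y) = v * Real.exp y := by
          rw [Real.exp_neg]; field_simp
        have h2 : ∀ p : ℝ, (v * Real.exp y) ^ p = v ^ p * Real.exp (y * p) := by
          intro p
          rw [Real.mul_rpow hv.le (Real.exp_pos y).le, Real.exp_mul]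
        have h3 : Real.exp (-y) ^ (β/2 - 1) = Real.exp (-y * (β/2 - 1)) := by
          rw [Real.exp_mul]
        have hexp : Real.exp (-y * (β - α * μ) / 2) =
            Real.exp (-y) * (Real.exp y * (Real.exp (y * (α * μ / 2 - 1)) *
              Real.exp (-y * (β/2 - 1)))) := by
          rw [← Real.exp_add, ← Real.exp_add, ← Real.exp_add]; ring_nf
        have hsw : α * y / 2 = y * (α/2) := by ring
        simp only [hg, smul_eq_mul, abs_neg, abs_of_pos hey, h0, h1, h2, h3,
          Real.log_exp, hexp, hsw]
        ring
    _ = (β^2 * α / (8 * B)) * c₂ ^ m * v ^ (α * μ / 2 - 1) *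
        ∫ y in Ioi (0:ℝ),
          y * Real.exp (-y * (β - α * μ) / 2) *
            (v ^ (α/2) * Real.exp (α * y / 2) + c₂) ^ (-(m + μ)) := by
        rw [MeasureTheory.integral_const_mul]
end
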